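/- (Positivity of the dispersion coefficients.) Fix r > 0 and k ∈ ℤ. (i) Principal series: if ν ∈ ℝ and s = −1/2 − iν, then ω̃(k) is a positive real number; explicitly, ω̃(k) = r⁻¹ · ( ((k − 1/2)² + ν²) / 2 ) · ‖Γ((k − 1/2 + iν)/2)‖² / ‖Γ((k + 1/2 + iν)/2)‖², where ‖·‖ denotes the complex absolute value. (ii) Complementary series: if s is real with −1/2 ≤ s < 0, then ω̃(k) is a positive real number. -/

import Mathlib

noncomputable section

open Real

lemma sin_mul_sin' (a b : ℝ) : sin a * sin b = (cos (a - b) - cos (a + b)) / 2 := by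
  rw [Real.cos_sub_cos, show (a - b + (a + b)) / 2 = a by ring,
    show (a - b - (a + b)) / 2 = -b by ring, Real.sin_neg]
  ring

lemma trig1 (k : ℤ) (s : ℝ) :
    sin (π * (((k : ℝ) + s) / 2)) * sin (π * (((k : ℝ) + 1 - s) / 2)) = sin (π * s) / 2 := by
  rw [sin_mul_sin',
    show π * (((k : ℝ) + s) / 2) - π * (((k : ℝ) + 1 - s) / 2) = π * s - π / 2 by ring,
    show π * (((k : ℝ) + s) / 2) + π * (((k : ℝ) + 1 - s) / 2) = (k : ℝ) * π + π / 2 by ring,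
    Real.cos_sub_pi_div_two, Real.cos_add_pi_div_two, Real.sin_int_mul_pi]
  ring

lemma trig2 (k : ℤ) (s : ℝ) :
    sin (π * (((k : ℝ) - s) / 2)) * sin (π * (((k : ℝ) + 1 + s) / 2)) = -(sin (π * s) / 2) := by
  rw [sin_mul_sin',
    show π * (((k : ℝ) - s) / 2) - π * (((k : ℝ) + 1 + s) / 2) = -(π * s + π / 2) by ring,
    show π * (((k : ℝ) - s) / 2) + π * (((k : ℝ) + 1 + s) / 2) = (k : ℝ) * π + π / 2 by ring,
    Real.cos_neg, Real.cos_add_pi_div_two, Real.cos_add_pi_div_two, Real.sin_int_mul_pi]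
  ring

set_option maxHeartbeats 1000000 in
lemma part2_pos (r : ℝ) (hr : 0 < r) (k : ℤ) (s : ℝ) (h1 : -(1/2 : ℝ) ≤ s) (h2 : s < 0) :
    0 < r⁻¹ * (((k : ℝ) + s) *
      (Real.Gamma (((k : ℝ) + s) / 2) * Real.Gamma (((k : ℝ) + 1 - s) / 2)) /
      (Real.Gamma (((k : ℝ) - s) / 2) * Real.Gamma (((k : ℝ) + 1 + s) / 2))) := by
  rcases le_or_gt k 0 with hk | hk
  · -- reflection case
    have hkr : (k : ℝ) ≤ 0 := by exact_mod_cast hk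
    set A := ((k : ℝ) + s) / 2 with hA
    set B := ((k : ℝ) + 1 - s) / 2 with hB
    set C := ((k : ℝ) - s) / 2 with hC
    set D := ((k : ℝ) + 1 + s) / 2 with hD
    have h1A : 0 < 1 - A := by rw [hA]; nlinarith
    have h1B : 0 < 1 - B := by rw [hB]; nlinarith
    have h1C : 0 < 1 - C := by rw [hC]; nlinarith
    have h1D : 0 < 1 - D := by rw [hD]; nlinarith
    have gA : 0 < Real.Gamma (1 - A) := Real.Gamma_pos_of_pos h1A
    have gB : 0 < Real.Gamma (1 - B) := Real.Gamma_pos_of_pos h1B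
    have gC : 0 < Real.Gamma (1 - C) := Real.Gamma_pos_of_pos h1C
    have gD : 0 < Real.Gamma (1 - D) := Real.Gamma_pos_of_pos h1D
    have hss : sin (π * s) < 0 := by
      apply Real.sin_neg_of_neg_of_neg_pi_lt
      · nlinarith [Real.pi_pos]
      · nlinarith [Real.pi_pos]
    have hAB : sin (π * A) * sin (π * B) = sin (π * s) / 2 := trig1 k s
    have hCD : sin (π * C) * sin (π * D) = -(sin (π * s) / 2) := trig2 k s
    have hsA : sin (π * A) ≠ 0 := by
      intro h; rw [h, zero_mul] at hAB; nlinarith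
    have hsB : sin (π * B) ≠ 0 := by
      intro h; rw [h, mul_zero] at hAB; nlinarith
    have hsC : sin (π * C) ≠ 0 := by
      intro h; rw [h, zero_mul] at hCD; nlinarith
    have hsD : sin (π * D) ≠ 0 := by
      intro h; rw [h, mul_zero] at hCD; nlinarith
    have eA : Real.Gamma A = π / (sin (π * A) * Real.Gamma (1 - A)) := by
      have := Real.Gamma_mul_Gamma_one_sub A
      field_simp at this ⊢
      linarith [this]
    have eB : Real.Gamma B = π / (sin (π * B) * Real.Gamma (1 - B)) := by
      have := Real.Gamma_mul_Gamma_one_sub B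
      field_simp at this ⊢
      linarith [this]
    have eC : Real.Gamma C = π / (sin (π * C) * Real.Gamma (1 - C)) := by
      have := Real.Gamma_mul_Gamma_one_sub C
      field_simp at this ⊢
      linarith [this]
    have eD : Real.Gamma D = π / (sin (π * D) * Real.Gamma (1 - D)) := by
      have := Real.Gamma_mul_Gamma_one_sub D
      field_simp at this ⊢
      linarith [this]
    have key : Real.Gamma A * Real.Gamma B / (Real.Gamma C * Real.Gamma D)
        = -(Real.Gamma (1 - C) * Real.Gamma (1 - D)) / (Real.Gamma (1 - A) * Real.Gamma (1 - B)) := by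
      rw [eA, eB, eC, eD]
      field_simp
      linear_combination hCD + hAB
    have hks : (k : ℝ) + s < 0 := by linarith
    rw [mul_div_assoc, key]
    apply mul_pos (inv_pos.mpr hr)
    rw [show ((k : ℝ) + s) * (-(Real.Gamma (1 - C) * Real.Gamma (1 - D)) /
        (Real.Gamma (1 - A) * Real.Gamma (1 - B)))
      = (-((k : ℝ) + s)) * ((Real.Gamma (1 - C) * Real.Gamma (1 - D)) /
        (Real.Gamma (1 - A) * Real.Gamma (1 - B))) by ring]
    exact mul_pos (by linarith) (div_pos (mul_pos gC gD) (mul_pos gA gB))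
  · -- all arguments positive
    have hkr : (1 : ℝ) ≤ (k : ℝ) := by exact_mod_cast hk
    apply mul_pos (inv_pos.mpr hr)
    apply div_pos
    · exact mul_pos (by linarith)
        (mul_pos (Real.Gamma_pos_of_pos (by linarith)) (Real.Gamma_pos_of_pos (by linarith)))
    · exact mul_pos (Real.Gamma_pos_of_pos (by linarith)) (Real.Gamma_pos_of_pos (by linarith))

/-- The Fourier coefficients `ω̃(k)` of the dispersion relation on de Sitter space. -/
def omt (r : ℝ) (s : ℂ) (k : ℤ) : ℂ :=
  (r : ℂ)⁻¹ * ((k : ℂ) + s) *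
    (Complex.Gamma (((k : ℂ) + s) / 2) * Complex.Gamma (((k : ℂ) + 1 - s) / 2)) /
    (Complex.Gamma (((k : ℂ) - s) / 2) * Complex.Gamma (((k : ℂ) + 1 + s) / 2))

lemma omt_real (r : ℝ) (s : ℝ) (k : ℤ) :
    omt r (s : ℂ) k = ((r⁻¹ * (((k : ℝ) + s) *
      (Real.Gamma (((k : ℝ) + s) / 2) * Real.Gamma (((k : ℝ) + 1 - s) / 2)) /
      (Real.Gamma (((k : ℝ) - s) / 2) * Real.Gamma (((k : ℝ) + 1 + s) / 2))) : ℝ) : ℂ) := by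
  unfold omt
  push_cast [← Complex.Gamma_ofReal]
  ring

lemma odd_ne_real (k : ℤ) : ((k : ℝ) - 1 / 2) ≠ 0 := by
  intro h
  have h2 : (2 * (k : ℝ) - 1) = 0 := by linarith
  have h3 : ((2 * k - 1 : ℤ) : ℝ) = 0 := by push_cast; linarith
  have := Int.cast_injective (α := ℝ) (h3.trans (Int.cast_zero (R := ℝ)).symm)
  omega

lemma halfint_ne_negnat (k : ℤ) (c : ℤ) (hc : c % 2 = 1) (ν : ℝ)
    (z : ℂ) (hz : z = ((k : ℂ) + (c : ℂ) / 2 + (ν : ℂ) * Complex.I) / 2) :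
    ∀ m : ℕ, z ≠ -m := by
  intro m hm
  have h2 : 4 * (k : ℂ) + 2 * (c : ℂ) + 4 * (ν : ℂ) * Complex.I = -(8 * m) := by
    rw [hz] at hm
    linear_combination 8 * hm
  have h3 := congrArg Complex.re h2
  simp [Complex.add_re, Complex.mul_re, Complex.I_re, Complex.I_im] at h3
  have h4 : ((4 * k + 2 * c + 8 * (m : ℤ) : ℤ) : ℝ) = 0 := by push_cast; linarith
  have h5 : (4 * k + 2 * c + 8 * (m : ℤ) : ℤ) = 0 := by exact_mod_cast h4
  omega

lemma part1_form (r : ℝ) (k : ℤ) (ν : ℝ) :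
    omt r (-(1 / 2) - (ν : ℂ) * Complex.I) k =
      ((r⁻¹ * ((((k : ℝ) - 1 / 2) ^ 2 + ν ^ 2) / 2) *
        (‖Complex.Gamma (((k : ℂ) - 1 / 2 + (ν : ℂ) * Complex.I) / 2)‖) ^ 2 /
        (‖Complex.Gamma (((k : ℂ) + 1 / 2 + (ν : ℂ) * Complex.I) / 2)‖) ^ 2 : ℝ) : ℂ) := by
  obtain ⟨w, hw⟩ : ∃ z : ℂ, ((k : ℂ) - 1 / 2 + (ν : ℂ) * Complex.I) / 2 = z := ⟨_, rfl⟩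
  obtain ⟨v, hv⟩ : ∃ z : ℂ, ((k : ℂ) + 1 / 2 + (ν : ℂ) * Complex.I) / 2 = z := ⟨_, rfl⟩
  rw [hw, hv]
  have hwpole : ∀ m : ℕ, w ≠ -m := by
    apply halfint_ne_negnat k (-1) (by decide) ν
    rw [← hw]; push_cast; ring
  have hvpole : ∀ m : ℕ, v ≠ -m := by
    apply halfint_ne_negnat k 1 (by decide) ν
    rw [← hv]; push_cast; ring
  have hwne : w ≠ 0 := by simpa using hwpole 0
  have hGw : Complex.Gamma w ≠ 0 := Complex.Gamma_ne_zero hwpole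
  have hGv : Complex.Gamma v ≠ 0 := Complex.Gamma_ne_zero hvpole
  have hGvc : (starRingEnd ℂ) (Complex.Gamma v) ≠ 0 := by
    simpa [map_eq_zero] using hGv
  have nw : Complex.Gamma w * (starRingEnd ℂ) (Complex.Gamma w)
      = ((‖Complex.Gamma w‖ : ℝ) : ℂ) ^ 2 := by
    rw [Complex.mul_conj]; norm_cast; exact (Complex.sq_norm _).symm
  have nv : Complex.Gamma v * (starRingEnd ℂ) (Complex.Gamma v)
      = ((‖Complex.Gamma v‖ : ℝ) : ℂ) ^ 2 := by
    rw [Complex.mul_conj]; norm_cast; exact (Complex.sq_norm _).symm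
  have kw : ((k : ℂ) + (-(1 / 2) - (ν : ℂ) * Complex.I)) * w
      = (((k : ℂ) - 1 / 2) ^ 2 + (ν : ℂ) ^ 2) / 2 := by
    rw [← hw]
    linear_combination (-(ν : ℂ) ^ 2 / 2) * Complex.I_sq
  have habs : ((‖Complex.Gamma v‖ : ℝ) : ℂ) ≠ 0 := by
    simpa using hGv
  unfold omt
  rw [show ((k : ℂ) + (-(1 / 2) - (ν : ℂ) * Complex.I)) / 2 = (starRingEnd ℂ) w by
      rw [← hw]; simp [map_div₀, Complex.conj_I, Complex.conj_ofReal, map_ofNat]; ring,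
    show ((k : ℂ) + 1 - (-(1 / 2) - (ν : ℂ) * Complex.I)) / 2 = w + 1 by rw [← hw]; ring,
    show ((k : ℂ) - (-(1 / 2) - (ν : ℂ) * Complex.I)) / 2 = v by rw [← hv]; ring,
    show ((k : ℂ) + 1 + (-(1 / 2) - (ν : ℂ) * Complex.I)) / 2 = (starRingEnd ℂ) v by
      rw [← hv]; simp [map_div₀, Complex.conj_I, Complex.conj_ofReal, map_ofNat]; ring,
    Complex.Gamma_conj, Complex.Gamma_conj, Complex.Gamma_add_one w hwne]
  push_cast
  rw [div_eq_div_iff (mul_ne_zero hGv hGvc) (pow_ne_zero 2 habs)]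
  linear_combination ((r : ℂ)⁻¹ * ((k : ℂ) + (-(1 / 2) - (ν : ℂ) * Complex.I)) * w *
      ((‖Complex.Gamma v‖ : ℝ) : ℂ) ^ 2) * nw +
    ((r : ℂ)⁻¹ * ((‖Complex.Gamma w‖ : ℝ) : ℂ) ^ 2 *
      ((‖Complex.Gamma v‖ : ℝ) : ℂ) ^ 2) * kw -
    ((r : ℂ)⁻¹ * ((((k : ℂ) - 1 / 2) ^ 2 + (ν : ℂ) ^ 2) / 2) *
      ((‖Complex.Gamma w‖ : ℝ) : ℂ) ^ 2) * nv

/-- positivity of the dispersion coefficients: (i) for the principal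
series `s = −1/2 − iν`, `ν ∈ ℝ`, the coefficient `ω̃(k)` is a positive real number with
the stated explicit Gamma-quotient form; (ii) for the complementary series
`s ∈ [−1/2, 0) ⊂ ℝ`, `ω̃(k)` is a positive real number. -/
theorem omt_positivity (r : ℝ) (hr : 0 < r) (k : ℤ) :
    (∀ ν : ℝ,
      (omt r (-(1 / 2) - (ν : ℂ) * Complex.I) k).im = 0 ∧
      0 < (omt r (-(1 / 2) - (ν : ℂ) * Complex.I) k).re ∧
      omt r (-(1 / 2) - (ν : ℂ) * Complex.I) k =
        (r : ℂ)⁻¹ * (((((k : ℝ) - 1 / 2) ^ 2 + ν ^ 2) / 2 : ℝ) : ℂ) *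
          ((‖Complex.Gamma (((k : ℂ) - 1 / 2 + (ν : ℂ) * Complex.I) / 2)‖ : ℝ) : ℂ) ^ 2 /
          ((‖Complex.Gamma (((k : ℂ) + 1 / 2 + (ν : ℂ) * Complex.I) / 2)‖ : ℝ) : ℂ) ^ 2) ∧
    (∀ s : ℝ, -(1 / 2) ≤ s → s < 0 →
      (omt r (s : ℂ) k).im = 0 ∧ 0 < (omt r (s : ℂ) k).re) := by
  constructor
  · intro ν
    have hform := part1_form r k ν
    have hGw : Complex.Gamma (((k : ℂ) - 1 / 2 + (ν : ℂ) * Complex.I) / 2) ≠ 0 := by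
      apply Complex.Gamma_ne_zero
      apply halfint_ne_negnat k (-1) (by decide) ν
      push_cast; ring
    have hGv : Complex.Gamma (((k : ℂ) + 1 / 2 + (ν : ℂ) * Complex.I) / 2) ≠ 0 := by
      apply Complex.Gamma_ne_zero
      apply halfint_ne_negnat k 1 (by decide) ν
      push_cast; ring
    have haw : 0 < ‖Complex.Gamma (((k : ℂ) - 1 / 2 + (ν : ℂ) * Complex.I) / 2)‖ :=
      norm_pos_iff.mpr hGw
    have hav : 0 < ‖Complex.Gamma (((k : ℂ) + 1 / 2 + (ν : ℂ) * Complex.I) / 2)‖ :=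
      norm_pos_iff.mpr hGv
    have hsq : 0 < ((k : ℝ) - 1 / 2) ^ 2 := by
      rcases (odd_ne_real k).lt_or_gt with h | h <;> nlinarith
    have hq : 0 < (((k : ℝ) - 1 / 2) ^ 2 + ν ^ 2) / 2 := by nlinarith
    refine ⟨by rw [hform]; exact Complex.ofReal_im _, ?_, ?_⟩
    · rw [hform, Complex.ofReal_re]
      exact div_pos (mul_pos (mul_pos (inv_pos.mpr hr) hq) (pow_pos haw 2)) (pow_pos hav 2)
    · rw [hform]; push_cast; ring
  · intro s hs1 hs2
    rw [omt_real]
    exact ⟨Complex.ofReal_im _, by rw [Complex.ofReal_re]; exact part2_pos r hr k s hs1 hs2⟩
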